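/- In a treatment-control completely randomized experiment with N units, N₁ ≥ 2 treated and N₀ = N − N₁ ≥ 2 controls, Neyman's variance estimator V̂ = Ŝ²(1)/N₁ + Ŝ²(0)/N₀ satisfies E[V̂] = S²(1)/N₁ + S²(0)/N₀, and consequently E[V̂] − Var(τ̂) = S²(τ)/N ≥ 0, i.e., V̂ is conservative in expectation for the variance of the difference-in-means estimator. -/

import Mathlib

open Finset

/-- Expectation of `f` under the uniform distribution on the finite set `s`. -/
noncomputable def avgOver {α : Type*} (s : Finset α) (f : α → ℝ) : ℝ :=
  (∑ a ∈ s, f a) / (s.card : ℝ)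

/-- Variance of `f` under the uniform distribution on the finite set `s`. -/
noncomputable def varOver {α : Type*} (s : Finset α) (f : α → ℝ) : ℝ :=
  avgOver s fun a => (f a - avgOver s f) ^ 2

/-- Finite-population mean. -/
noncomputable def fpMean {N : ℕ} (Y : Fin N → ℝ) : ℝ := (∑ i, Y i) / (N : ℝ)

/-- Finite-population variance `S² = (N-1)⁻¹ Σᵢ (Yᵢ - Ȳ)²`. -/
noncomputable def fpVar {N : ℕ} (Y : Fin N → ℝ) : ℝ :=
  (∑ i, (Y i - fpMean Y) ^ 2) / ((N : ℝ) - 1)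

/-- The set of treatment assignments: all subsets of the `N` units of size `N₁`. -/
def assignments (N N₁ : ℕ) : Finset (Finset (Fin N)) :=
  Finset.powersetCard N₁ Finset.univ

/-- Observed outcome. -/
noncomputable def obsY {N : ℕ} (Y1 Y0 : Fin N → ℝ) (A : Finset (Fin N)) (i : Fin N) : ℝ :=
  if i ∈ A then Y1 i else Y0 i

/-- Treated-arm sample mean `Ŷ(1)`. -/
noncomputable def yhat1 {N : ℕ} (Y1 Y0 : Fin N → ℝ) (N₁ : ℕ) (A : Finset (Fin N)) : ℝ :=
  (∑ i, if i ∈ A then obsY Y1 Y0 A i else 0) / (N₁ : ℝ)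

/-- Control-arm sample mean `Ŷ(0)`. -/
noncomputable def yhat0 {N : ℕ} (Y1 Y0 : Fin N → ℝ) (N₀ : ℕ) (A : Finset (Fin N)) : ℝ :=
  (∑ i, if i ∉ A then obsY Y1 Y0 A i else 0) / (N₀ : ℝ)

/-- The difference-in-means estimator `τ̂`. -/
noncomputable def tauhat {N : ℕ} (Y1 Y0 : Fin N → ℝ) (N₁ N₀ : ℕ) (A : Finset (Fin N)) : ℝ :=
  yhat1 Y1 Y0 N₁ A - yhat0 Y1 Y0 N₀ A

/-- Treated-arm sample variance `Ŝ²(1) = (N₁-1)⁻¹ Σᵢ (Yᵢ - Ŷ(1))² 1{Zᵢ = 1}`. -/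
noncomputable def s2hat1 {N : ℕ} (Y1 Y0 : Fin N → ℝ) (N₁ : ℕ) (A : Finset (Fin N)) : ℝ :=
  (∑ i, if i ∈ A then (obsY Y1 Y0 A i - yhat1 Y1 Y0 N₁ A) ^ 2 else 0) / ((N₁ : ℝ) - 1)

/-- Control-arm sample variance `Ŝ²(0) = (N₀-1)⁻¹ Σᵢ (Yᵢ - Ŷ(0))² 1{Zᵢ = 0}`. -/
noncomputable def s2hat0 {N : ℕ} (Y1 Y0 : Fin N → ℝ) (N₀ : ℕ) (A : Finset (Fin N)) : ℝ :=
  (∑ i, if i ∉ A then (obsY Y1 Y0 A i - yhat0 Y1 Y0 N₀ A) ^ 2 else 0) / ((N₀ : ℝ) - 1)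

/-- Neyman's variance estimator `V̂ = Ŝ²(1)/N₁ + Ŝ²(0)/N₀`. -/
noncomputable def vhatNeyman {N : ℕ} (Y1 Y0 : Fin N → ℝ) (N₁ N₀ : ℕ) (A : Finset (Fin N)) : ℝ :=
  s2hat1 Y1 Y0 N₁ A / (N₁ : ℝ) + s2hat0 Y1 Y0 N₀ A / (N₀ : ℝ)


lemma card_filter_subset {N : ℕ} (k : ℕ) (s : Finset (Fin N)) (hs : s.card ≤ k) :
    ((Finset.powersetCard k (univ : Finset (Fin N))).filter (fun A => s ⊆ A)).card
      = (N - s.card).choose (k - s.card) := by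
  have hcard : ((univ : Finset (Fin N)) \ s).card = N - s.card := by
    rw [card_sdiff_of_subset (subset_univ s), card_univ, Fintype.card_fin]
  rw [← hcard, ← Finset.card_powersetCard (k - s.card) ((univ : Finset (Fin N)) \ s)]
  apply Finset.card_bij (fun A _ => A \ s)
  · intro A hA
    simp only [mem_filter, mem_powersetCard] at hA
    rw [mem_powersetCard]
    exact ⟨sdiff_subset_sdiff hA.1.1 (le_refl s), by rw [card_sdiff_of_subset hA.2, hA.1.2]⟩
  · intro A hA B hB h
    simp only [mem_filter] at hA hB
    rw [← sdiff_union_of_subset hA.2, ← sdiff_union_of_subset hB.2, h]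
  · intro B hB
    rw [mem_powersetCard] at hB
    have hdisj : Disjoint B s := Finset.disjoint_of_subset_left hB.1 sdiff_disjoint
    refine ⟨B ∪ s, ?_, union_sdiff_cancel_right hdisj⟩
    simp only [mem_filter, mem_powersetCard]
    refine ⟨⟨subset_univ _, ?_⟩, subset_union_right⟩
    rw [card_union_of_disjoint hdisj, hB.2]
    omega

lemma count_single {N : ℕ} (k : ℕ) (hk : 1 ≤ k) (i : Fin N) :
    ((assignments N k).filter (fun A => i ∈ A)).card = (N-1).choose (k-1) := by
  have := card_filter_subset (N := N) k {i} (by simpa using hk)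
  simpa [assignments, Finset.singleton_subset_iff] using this

lemma count_pair {N : ℕ} (k : ℕ) (hk : 2 ≤ k) (i j : Fin N) (hij : i ≠ j) :
    ((assignments N k).filter (fun A => i ∈ A ∧ j ∈ A)).card = (N-2).choose (k-2) := by
  have h2 : ({i, j} : Finset (Fin N)).card = 2 := card_pair hij
  have := card_filter_subset (N := N) k {i, j} (by rw [h2]; exact hk)
  rw [h2] at this
  simpa [assignments, Finset.insert_subset_iff, Finset.singleton_subset_iff] using this

lemma sum_TA {N : ℕ} (k : ℕ) (hk : 1 ≤ k) (f : Fin N → ℝ) :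
    ∑ A ∈ assignments N k, ∑ i ∈ A, f i = ((N-1).choose (k-1) : ℝ) * ∑ i, f i := by
  have h1 : ∀ A ∈ assignments N k, ∑ i ∈ A, f i = ∑ i, if i ∈ A then f i else 0 := by
    intro A hA
    rw [Finset.sum_ite_mem, univ_inter]
  rw [Finset.sum_congr rfl h1, Finset.sum_comm]
  have h2 : ∀ i : Fin N, ∑ A ∈ assignments N k, (if i ∈ A then f i else 0)
      = ((N-1).choose (k-1) : ℝ) * f i := by
    intro i
    rw [← Finset.sum_filter, Finset.sum_const, count_single k hk i, nsmul_eq_mul]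
  rw [Finset.sum_congr rfl (fun i _ => h2 i), ← Finset.mul_sum]

lemma sum_TTA {N : ℕ} (k : ℕ) (hk : 2 ≤ k) (f g : Fin N → ℝ) :
    ∑ A ∈ assignments N k, (∑ i ∈ A, f i) * (∑ j ∈ A, g j)
      = ((N-1).choose (k-1) : ℝ) * ∑ i, f i * g i
        + ((N-2).choose (k-2) : ℝ) * ((∑ i, f i) * (∑ j, g j) - ∑ i, f i * g i) := by
  set c1 : ℝ := ((N-1).choose (k-1) : ℝ)
  set c2 : ℝ := ((N-2).choose (k-2) : ℝ)
  have e : ∀ (A : Finset (Fin N)) (h : Fin N → ℝ),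
      ∑ i ∈ A, h i = ∑ i, if i ∈ A then h i else 0 := fun A h => by
    rw [Finset.sum_ite_mem, univ_inter]
  have h1 : ∀ A ∈ assignments N k, (∑ i ∈ A, f i) * (∑ j ∈ A, g j)
      = ∑ i, ∑ j, if i ∈ A ∧ j ∈ A then f i * g j else 0 := by
    intro A _
    rw [Finset.sum_mul_sum, e A (fun i => ∑ j ∈ A, f i * g j)]
    refine Finset.sum_congr rfl fun i _ => ?_
    by_cases hi : i ∈ A
    · simp only [hi, if_true, true_and]
      exact e A (fun j => f i * g j)
    · simp [hi]
  rw [Finset.sum_congr rfl h1, Finset.sum_comm]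
  have h2 : ∀ i j : Fin N, ∑ A ∈ assignments N k, (if i ∈ A ∧ j ∈ A then f i * g j else 0)
      = (if i = j then c1 else c2) * (f i * g j) := by
    intro i j
    by_cases hij : i = j
    · subst hij
      simp only [and_self, if_pos rfl]
      rw [← Finset.sum_filter, Finset.sum_const, count_single k (by omega) i, nsmul_eq_mul,
        if_pos trivial]
    · simp only [if_neg hij]
      rw [← Finset.sum_filter, Finset.sum_const, count_pair k hk i j hij, nsmul_eq_mul]
  have h2' : ∀ i : Fin N, ∑ j, ∑ A ∈ assignments N k, (if i ∈ A ∧ j ∈ A then f i * g j else 0)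
      = c1 * (f i * g i) + c2 * (f i * (∑ j, g j) - f i * g i) := by
    intro i
    rw [Finset.sum_congr rfl fun j _ => h2 i j,
      ← Finset.add_sum_erase univ (fun j => (if i = j then c1 else c2) * (f i * g j)) (mem_univ i)]
    have : ∀ j ∈ univ.erase i, (if i = j then c1 else c2) * (f i * g j) = c2 * (f i * g j) := by
      intro j hj
      rw [if_neg (Ne.symm (Finset.ne_of_mem_erase hj))]
    rw [Finset.sum_congr rfl this, ← Finset.mul_sum, ← Finset.mul_sum,
      Finset.sum_erase_eq_sub (mem_univ i), if_pos rfl, mul_sub]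
  have := Finset.sum_congr rfl fun i (_ : i ∈ (univ : Finset (Fin N))) =>
    (Finset.sum_comm (s := univ) (t := assignments N k)
      (f := fun j A => if i ∈ A ∧ j ∈ A then f i * g j else 0)).symm.trans (h2' i)
  rw [this, Finset.sum_add_distrib, ← Finset.mul_sum, ← Finset.mul_sum]
  rw [mul_sub, Finset.sum_sub_distrib, mul_sub, ← Finset.sum_mul]

lemma sum_mem_ite {N : ℕ} (A : Finset (Fin N)) (h : Fin N → ℝ) :
    ∑ i, (if i ∈ A then h i else 0) = ∑ i ∈ A, h i := by
  rw [Finset.sum_ite_mem, univ_inter]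

lemma sum_not_mem_ite {N : ℕ} (A : Finset (Fin N)) (h : Fin N → ℝ) :
    ∑ i, (if i ∉ A then h i else 0) = ∑ i, h i - ∑ i ∈ A, h i := by
  rw [← sum_mem_ite A h, ← Finset.sum_sub_distrib]
  refine Finset.sum_congr rfl fun i _ => ?_
  by_cases hi : i ∈ A <;> simp [hi]

lemma yhat1_eq {N : ℕ} (Y1 Y0 : Fin N → ℝ) (N₁ : ℕ) (A : Finset (Fin N)) :
    yhat1 Y1 Y0 N₁ A = (∑ i ∈ A, Y1 i) / (N₁ : ℝ) := by
  unfold yhat1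
  rw [← sum_mem_ite A Y1]
  congr 1
  refine Finset.sum_congr rfl fun i _ => ?_
  by_cases hi : i ∈ A <;> simp [hi, obsY]

lemma yhat0_eq {N : ℕ} (Y1 Y0 : Fin N → ℝ) (N₀ : ℕ) (A : Finset (Fin N)) :
    yhat0 Y1 Y0 N₀ A = ((∑ i, Y0 i) - ∑ i ∈ A, Y0 i) / (N₀ : ℝ) := by
  unfold yhat0
  rw [← sum_not_mem_ite A Y0]
  congr 1
  refine Finset.sum_congr rfl fun i _ => ?_
  by_cases hi : i ∈ A <;> simp [hi, obsY]

lemma sq_sum_expand {N : ℕ} (A : Finset (Fin N)) (Y : Fin N → ℝ) (c : ℝ) :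
    ∑ i ∈ A, (Y i - c) ^ 2
      = (∑ i ∈ A, Y i ^ 2) - 2 * c * (∑ i ∈ A, Y i) + (A.card : ℝ) * c ^ 2 := by
  have : ∀ i ∈ A, (Y i - c) ^ 2 = Y i ^ 2 - 2 * c * Y i + c ^ 2 := fun i _ => by ring
  rw [Finset.sum_congr rfl this, Finset.sum_add_distrib, Finset.sum_sub_distrib,
    Finset.sum_const, ← Finset.mul_sum, nsmul_eq_mul]

lemma s2hat1_eq {N : ℕ} (Y1 Y0 : Fin N → ℝ) (N₁ : ℕ) (hN₁ : N₁ ≠ 0)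
    (A : Finset (Fin N)) (hA : A ∈ assignments N N₁) :
    s2hat1 Y1 Y0 N₁ A
      = ((∑ i ∈ A, Y1 i ^ 2) - (∑ i ∈ A, Y1 i) * (∑ i ∈ A, Y1 i) / (N₁ : ℝ))
          / ((N₁ : ℝ) - 1) := by
  have hcard : (A.card : ℝ) = (N₁ : ℝ) := by
    rw [(Finset.mem_powersetCard.mp hA).2]
  have hN₁' : (N₁ : ℝ) ≠ 0 := Nat.cast_ne_zero.mpr hN₁
  unfold s2hat1
  congr 1
  have e1 : ∑ i, (if i ∈ A then (obsY Y1 Y0 A i - yhat1 Y1 Y0 N₁ A) ^ 2 else 0)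
      = ∑ i ∈ A, (Y1 i - yhat1 Y1 Y0 N₁ A) ^ 2 := by
    rw [← sum_mem_ite A (fun i => (Y1 i - yhat1 Y1 Y0 N₁ A) ^ 2)]
    refine Finset.sum_congr rfl fun i _ => ?_
    by_cases hi : i ∈ A <;> simp [hi, obsY]
  rw [e1, sq_sum_expand, hcard, yhat1_eq]
  field_simp
  ring

lemma s2hat0_eq {N : ℕ} (Y1 Y0 : Fin N → ℝ) (N₁ N₀ : ℕ) (hadd : N₁ + N₀ = N) (hN₀ : N₀ ≠ 0)
    (A : Finset (Fin N)) (hA : A ∈ assignments N N₁) :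
    s2hat0 Y1 Y0 N₀ A
      = (((∑ i, Y0 i ^ 2) - ∑ i ∈ A, Y0 i ^ 2)
          - ((∑ i, Y0 i) - ∑ i ∈ A, Y0 i) * ((∑ i, Y0 i) - ∑ i ∈ A, Y0 i) / (N₀ : ℝ))
          / ((N₀ : ℝ) - 1) := by
  have hcard : (A.card : ℝ) = (N₁ : ℝ) := by
    rw [(Finset.mem_powersetCard.mp hA).2]
  have hN : ((N : ℕ) : ℝ) = (N₁ : ℝ) + (N₀ : ℝ) := by
    rw [← hadd]; push_cast; ring
  have hN₀' : (N₀ : ℝ) ≠ 0 := Nat.cast_ne_zero.mpr hN₀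
  unfold s2hat0
  congr 1
  have e1 : ∑ i, (if i ∉ A then (obsY Y1 Y0 A i - yhat0 Y1 Y0 N₀ A) ^ 2 else 0)
      = ∑ i, (Y0 i - yhat0 Y1 Y0 N₀ A) ^ 2 - ∑ i ∈ A, (Y0 i - yhat0 Y1 Y0 N₀ A) ^ 2 := by
    rw [← sum_not_mem_ite A (fun i => (Y0 i - yhat0 Y1 Y0 N₀ A) ^ 2)]
    refine Finset.sum_congr rfl fun i _ => ?_
    by_cases hi : i ∈ A <;> simp [hi, obsY]
  have e2 : ∑ i : Fin N, (Y0 i - yhat0 Y1 Y0 N₀ A) ^ 2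
      = (∑ i, Y0 i ^ 2) - 2 * yhat0 Y1 Y0 N₀ A * (∑ i, Y0 i)
        + (N : ℝ) * yhat0 Y1 Y0 N₀ A ^ 2 := by
    have := sq_sum_expand (univ : Finset (Fin N)) Y0 (yhat0 Y1 Y0 N₀ A)
    rwa [Finset.card_univ, Fintype.card_fin] at this
  rw [e1, e2, sq_sum_expand, hcard, yhat0_eq, hN]
  field_simp
  ring

lemma varOver_eq {α : Type*} (s : Finset α) (hs : (s.card : ℝ) ≠ 0) (f : α → ℝ) :
    varOver s f = (∑ a ∈ s, f a ^ 2) / (s.card : ℝ) - ((∑ a ∈ s, f a) / (s.card : ℝ)) ^ 2 := by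
  unfold varOver avgOver
  have : ∀ a ∈ s, (f a - (∑ b ∈ s, f b) / (s.card : ℝ)) ^ 2
      = f a ^ 2 - 2 * ((∑ b ∈ s, f b) / (s.card : ℝ)) * f a
        + ((∑ b ∈ s, f b) / (s.card : ℝ)) ^ 2 := fun a _ => by ring
  rw [Finset.sum_congr rfl this, Finset.sum_add_distrib, Finset.sum_sub_distrib,
    Finset.sum_const, ← Finset.mul_sum, nsmul_eq_mul]
  field_simp
  ring

lemma fpVar_eq {N : ℕ} (hN : (N : ℝ) ≠ 0) (Y : Fin N → ℝ) :
    fpVar Y = ((∑ i, Y i ^ 2) - (∑ i, Y i) * (∑ i, Y i) / (N : ℝ)) / ((N : ℝ) - 1) := by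
  unfold fpVar fpMean
  congr 1
  have : ∀ i ∈ (univ : Finset (Fin N)), (Y i - (∑ j, Y j) / (N : ℝ)) ^ 2
      = Y i ^ 2 - 2 * ((∑ j, Y j) / (N : ℝ)) * Y i + ((∑ j, Y j) / (N : ℝ)) ^ 2 :=
    fun i _ => by ring
  rw [Finset.sum_congr rfl this, Finset.sum_add_distrib, Finset.sum_sub_distrib,
    Finset.sum_const, ← Finset.mul_sum, nsmul_eq_mul, Finset.card_univ, Fintype.card_fin]
  field_simp
  ring

set_option maxHeartbeats 2000000 in
/-- Neyman's variance estimator satisfies `E[V̂] = S²(1)/N₁ + S²(0)/N₀`, hence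
`E[V̂] - Var(τ̂) = S²(τ)/N ≥ 0`: it is conservative in expectation. -/
theorem neyman_variance_estimator_conservative (N N₁ N₀ : ℕ) (hadd : N₁ + N₀ = N)
    (h1 : 2 ≤ N₁) (h0 : 2 ≤ N₀) (Y1 Y0 : Fin N → ℝ) :
    avgOver (assignments N N₁) (vhatNeyman Y1 Y0 N₁ N₀)
        = fpVar Y1 / (N₁ : ℝ) + fpVar Y0 / (N₀ : ℝ)
    ∧ avgOver (assignments N N₁) (vhatNeyman Y1 Y0 N₁ N₀)
        - varOver (assignments N N₁) (tauhat Y1 Y0 N₁ N₀)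
        = fpVar (fun i => Y1 i - Y0 i) / (N : ℝ)
    ∧ 0 ≤ fpVar (fun i => Y1 i - Y0 i) / (N : ℝ) := by
  have hN1 : N₁ ≠ 0 := by omega
  have hN0 : N₀ ≠ 0 := by omega
  have hkN : N₁ ≤ N := by omega
  have r1 : (2:ℝ) ≤ (N₁:ℝ) := by exact_mod_cast h1
  have r0 : (2:ℝ) ≤ (N₀:ℝ) := by exact_mod_cast h0
  have hNr : (N:ℝ) = (N₁:ℝ) + (N₀:ℝ) := by rw [← hadd]; push_cast; ring
  have hr1 : (N₁:ℝ) ≠ 0 := by linarith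
  have hr0 : (N₀:ℝ) ≠ 0 := by linarith
  have hr1m : (N₁:ℝ) - 1 ≠ 0 := by linarith
  have hr0m : (N₀:ℝ) - 1 ≠ 0 := by linarith
  have hrN : (N:ℝ) ≠ 0 := by rw [hNr]; linarith
  have hrNm : (N:ℝ) - 1 ≠ 0 := by rw [hNr]; linarith
  have hrN' : (N₁:ℝ) + (N₀:ℝ) ≠ 0 := by linarith
  have hrNm' : (N₁:ℝ) + (N₀:ℝ) - 1 ≠ 0 := by linarith
  have hMn : (assignments N N₁).card = N.choose N₁ := by
    rw [assignments, Finset.card_powersetCard, Finset.card_univ, Fintype.card_fin]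
  have hM : ((assignments N N₁).card : ℝ) ≠ 0 := by
    rw [hMn]; exact_mod_cast (Nat.choose_pos hkN).ne'
  -- choose identities
  have hc1 : (N:ℝ) * ((N-1).choose (N₁-1) : ℝ) = (N₁:ℝ) * ((assignments N N₁).card : ℝ) := by
    have h : N * (N-1).choose (N₁-1) = N₁ * N.choose N₁ := by
      have h2 := Nat.add_one_mul_choose_eq (N-1) (N₁-1)
      have e1 : N - 1 + 1 = N := by omega
      have e2 : N₁ - 1 + 1 = N₁ := by omega
      rw [e1, e2] at h2
      rw [h2, Nat.mul_comm]
    rw [hMn]; exact_mod_cast h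
  have e3 : ((N-1:ℕ):ℝ) = (N:ℝ) - 1 := by
    rw [Nat.cast_sub (by omega : 1 ≤ N)]; norm_num
  have e4 : ((N₁-1:ℕ):ℝ) = (N₁:ℝ) - 1 := by
    rw [Nat.cast_sub (by omega : 1 ≤ N₁)]; norm_num
  have hc2 : ((N:ℝ)-1) * ((N-2).choose (N₁-2) : ℝ)
      = ((N₁:ℝ)-1) * ((N-1).choose (N₁-1) : ℝ) := by
    have h : (N-1) * (N-2).choose (N₁-2) = (N₁-1) * (N-1).choose (N₁-1) := by
      have h2 := Nat.add_one_mul_choose_eq (N-2) (N₁-2)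
      have e1 : N - 2 + 1 = N - 1 := by omega
      have e2 : N₁ - 2 + 1 = N₁ - 1 := by omega
      rw [e1, e2] at h2
      rw [h2, Nat.mul_comm]
    rw [← e3, ← e4]; exact_mod_cast h
  have ec1 : ((N-1).choose (N₁-1) : ℝ)
      = (N₁:ℝ) * ((assignments N N₁).card : ℝ) / (N:ℝ) := by
    rw [eq_div_iff hrN]; linarith [hc1]
  have ec2 : ((N-2).choose (N₁-2) : ℝ)
      = ((N₁:ℝ)-1) * ((N-1).choose (N₁-1) : ℝ) / ((N:ℝ)-1) := by
    rw [eq_div_iff hrNm]; linarith [hc2]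
  -- conversions
  have hq1' : (∑ i, Y1 i * Y1 i) = ∑ i, Y1 i ^ 2 :=
    Finset.sum_congr rfl fun i _ => (pow_two (Y1 i)).symm
  have hq0' : (∑ i, Y0 i * Y0 i) = ∑ i, Y0 i ^ 2 :=
    Finset.sum_congr rfl fun i _ => (pow_two (Y0 i)).symm
  -- arm 1 sum
  have hS1 : ∑ A ∈ assignments N N₁, s2hat1 Y1 Y0 N₁ A
      = (((N-1).choose (N₁-1) : ℝ) * (∑ i, Y1 i ^ 2)
          - (((N-1).choose (N₁-1) : ℝ) * (∑ i, Y1 i ^ 2)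
             + ((N-2).choose (N₁-2) : ℝ) * ((∑ i, Y1 i) * (∑ j, Y1 j) - ∑ i, Y1 i ^ 2))
            / (N₁:ℝ)) / ((N₁:ℝ) - 1) := by
    rw [Finset.sum_congr rfl (fun A hA => s2hat1_eq Y1 Y0 N₁ hN1 A hA), ← Finset.sum_div,
      Finset.sum_sub_distrib, ← Finset.sum_div, sum_TA N₁ (by omega) (fun i => Y1 i ^ 2),
      sum_TTA N₁ h1 Y1 Y1, hq1']
  -- arm 0 sum
  have e0 : ∀ A ∈ assignments N N₁, s2hat0 Y1 Y0 N₀ A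
      = ((∑ i, Y0 i ^ 2) - (∑ i ∈ A, Y0 i ^ 2)
          - ((∑ i, Y0 i) * (∑ i, Y0 i) - 2 * (∑ i, Y0 i) * (∑ i ∈ A, Y0 i)
             + (∑ i ∈ A, Y0 i) * (∑ j ∈ A, Y0 j)) / (N₀:ℝ)) / ((N₀:ℝ) - 1) := by
    intro A hA
    rw [s2hat0_eq Y1 Y0 N₁ N₀ hadd hN0 A hA]
    ring
  have hS0 : ∑ A ∈ assignments N N₁, s2hat0 Y1 Y0 N₀ A
      = (((assignments N N₁).card : ℝ) * (∑ i, Y0 i ^ 2)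
          - ((N-1).choose (N₁-1) : ℝ) * (∑ i, Y0 i ^ 2)
          - (((assignments N N₁).card : ℝ) * ((∑ i, Y0 i) * (∑ i, Y0 i))
             - 2 * (∑ i, Y0 i) * (((N-1).choose (N₁-1) : ℝ) * (∑ i, Y0 i))
             + (((N-1).choose (N₁-1) : ℝ) * (∑ i, Y0 i ^ 2)
                + ((N-2).choose (N₁-2) : ℝ)
                  * ((∑ i, Y0 i) * (∑ j, Y0 j) - ∑ i, Y0 i ^ 2))) / (N₀:ℝ))
          / ((N₀:ℝ) - 1) := by
    rw [Finset.sum_congr rfl e0, ← Finset.sum_div, Finset.sum_sub_distrib,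
      Finset.sum_sub_distrib, ← Finset.sum_div, Finset.sum_add_distrib,
      Finset.sum_sub_distrib, Finset.sum_const, nsmul_eq_mul, Finset.sum_const, nsmul_eq_mul,
      sum_TA N₁ (by omega) (fun i => Y0 i ^ 2), ← Finset.mul_sum,
      sum_TA N₁ (by omega) Y0, sum_TTA N₁ h1 Y0 Y0, hq0']
  -- tauhat
  have htau : ∀ A ∈ assignments N N₁, tauhat Y1 Y0 N₁ N₀ A
      = (∑ i ∈ A, (Y1 i / (N₁:ℝ) + Y0 i / (N₀:ℝ))) - (∑ i, Y0 i) / (N₀:ℝ) := by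
    intro A hA
    rw [tauhat, yhat1_eq, yhat0_eq, Finset.sum_add_distrib, ← Finset.sum_div, ← Finset.sum_div]
    ring
  have hWsum : (∑ i, (Y1 i / (N₁:ℝ) + Y0 i / (N₀:ℝ)))
      = (∑ i, Y1 i) / (N₁:ℝ) + (∑ i, Y0 i) / (N₀:ℝ) := by
    rw [Finset.sum_add_distrib, ← Finset.sum_div, ← Finset.sum_div]
  have hWsum2 : (∑ i, (Y1 i / (N₁:ℝ) + Y0 i / (N₀:ℝ)) * (Y1 i / (N₁:ℝ) + Y0 i / (N₀:ℝ)))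
      = (∑ i, Y1 i ^ 2) / (N₁:ℝ)^2 + (∑ i, Y0 i ^ 2) / (N₀:ℝ)^2
        + (∑ i, Y1 i * Y0 i) * (2 / ((N₁:ℝ) * (N₀:ℝ))) := by
    have hpt : ∀ i ∈ (univ : Finset (Fin N)),
        (Y1 i / (N₁:ℝ) + Y0 i / (N₀:ℝ)) * (Y1 i / (N₁:ℝ) + Y0 i / (N₀:ℝ))
        = Y1 i ^ 2 / (N₁:ℝ)^2 + Y0 i ^ 2 / (N₀:ℝ)^2
          + (Y1 i * Y0 i) * (2 / ((N₁:ℝ) * (N₀:ℝ))) := by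
      intro i _
      field_simp
      ring
    rw [Finset.sum_congr rfl hpt, Finset.sum_add_distrib, Finset.sum_add_distrib,
      ← Finset.sum_div, ← Finset.sum_div, ← Finset.sum_mul]
  have hT : ∑ A ∈ assignments N N₁, tauhat Y1 Y0 N₁ N₀ A
      = ((N-1).choose (N₁-1) : ℝ) * (∑ i, (Y1 i / (N₁:ℝ) + Y0 i / (N₀:ℝ)))
        - ((assignments N N₁).card : ℝ) * ((∑ i, Y0 i) / (N₀:ℝ)) := by
    rw [Finset.sum_congr rfl htau, Finset.sum_sub_distrib,
      sum_TA N₁ (by omega) (fun i => Y1 i / (N₁:ℝ) + Y0 i / (N₀:ℝ)),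
      Finset.sum_const, nsmul_eq_mul]
  have htau2 : ∀ A ∈ assignments N N₁, tauhat Y1 Y0 N₁ N₀ A ^ 2
      = (∑ i ∈ A, (Y1 i / (N₁:ℝ) + Y0 i / (N₀:ℝ)))
          * (∑ j ∈ A, (Y1 j / (N₁:ℝ) + Y0 j / (N₀:ℝ)))
        - 2 * ((∑ i, Y0 i) / (N₀:ℝ)) * (∑ i ∈ A, (Y1 i / (N₁:ℝ) + Y0 i / (N₀:ℝ)))
        + ((∑ i, Y0 i) / (N₀:ℝ)) ^ 2 := by
    intro A hA
    rw [htau A hA]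
    ring
  have hT2 : ∑ A ∈ assignments N N₁, tauhat Y1 Y0 N₁ N₀ A ^ 2
      = (((N-1).choose (N₁-1) : ℝ)
            * (∑ i, (Y1 i / (N₁:ℝ) + Y0 i / (N₀:ℝ)) * (Y1 i / (N₁:ℝ) + Y0 i / (N₀:ℝ)))
          + ((N-2).choose (N₁-2) : ℝ)
            * ((∑ i, (Y1 i / (N₁:ℝ) + Y0 i / (N₀:ℝ)))
                 * (∑ j, (Y1 j / (N₁:ℝ) + Y0 j / (N₀:ℝ)))
               - ∑ i, (Y1 i / (N₁:ℝ) + Y0 i / (N₀:ℝ)) * (Y1 i / (N₁:ℝ) + Y0 i / (N₀:ℝ))))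
        - 2 * ((∑ i, Y0 i) / (N₀:ℝ))
            * (((N-1).choose (N₁-1) : ℝ) * (∑ i, (Y1 i / (N₁:ℝ) + Y0 i / (N₀:ℝ))))
        + ((assignments N N₁).card : ℝ) * ((∑ i, Y0 i) / (N₀:ℝ)) ^ 2 := by
    rw [Finset.sum_congr rfl htau2, Finset.sum_add_distrib, Finset.sum_sub_distrib,
      sum_TTA N₁ h1 (fun i => Y1 i / (N₁:ℝ) + Y0 i / (N₀:ℝ))
        (fun i => Y1 i / (N₁:ℝ) + Y0 i / (N₀:ℝ)), ← Finset.mul_sum,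
      sum_TA N₁ (by omega) (fun i => Y1 i / (N₁:ℝ) + Y0 i / (N₀:ℝ)),
      Finset.sum_const, nsmul_eq_mul]
  -- fpVar conversions
  have hd1 : (∑ i, (Y1 i - Y0 i)) = (∑ i, Y1 i) - (∑ i, Y0 i) := Finset.sum_sub_distrib _ _
  have hd2 : (∑ i, (Y1 i - Y0 i) ^ 2)
      = (∑ i, Y1 i ^ 2) - 2 * (∑ i, Y1 i * Y0 i) + (∑ i, Y0 i ^ 2) := by
    have hpt : ∀ i ∈ (univ : Finset (Fin N)),
        (Y1 i - Y0 i) ^ 2 = Y1 i ^ 2 - 2 * (Y1 i * Y0 i) + Y0 i ^ 2 := fun i _ => by ring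
    rw [Finset.sum_congr rfl hpt, Finset.sum_add_distrib, Finset.sum_sub_distrib,
      ← Finset.mul_sum]
  -- expectation of vhat
  have hEV : avgOver (assignments N N₁) (vhatNeyman Y1 Y0 N₁ N₀)
      = ((∑ A ∈ assignments N N₁, s2hat1 Y1 Y0 N₁ A) / (N₁:ℝ)
         + (∑ A ∈ assignments N N₁, s2hat0 Y1 Y0 N₀ A) / (N₀:ℝ))
        / ((assignments N N₁).card : ℝ) := by
    rw [avgOver]
    congr 1
    simp only [vhatNeyman]
    rw [Finset.sum_add_distrib, ← Finset.sum_div, ← Finset.sum_div]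
  have hfp1 := fpVar_eq (N := N) hrN Y1
  have hfp0 := fpVar_eq (N := N) hrN Y0
  have hfpd := fpVar_eq (N := N) hrN (fun i => Y1 i - Y0 i)
  rw [hd1, hd2] at hfpd
  have goal1 : avgOver (assignments N N₁) (vhatNeyman Y1 Y0 N₁ N₀)
      = fpVar Y1 / (N₁ : ℝ) + fpVar Y0 / (N₀ : ℝ) := by
    rw [hEV, hS1, hS0, hfp1, hfp0, ec2, ec1, hNr]
    field_simp
    ring
  refine ⟨goal1, ?_, ?_⟩
  · rw [goal1, hfp1, hfp0, hfpd,
      varOver_eq (assignments N N₁) hM (tauhat Y1 Y0 N₁ N₀), hT, hT2, hWsum, hWsum2,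
      ec2, ec1, hNr]
    field_simp
    ring
  · have h1' : 0 ≤ fpVar (fun i => Y1 i - Y0 i) := by
      apply div_nonneg (Finset.sum_nonneg fun i _ => sq_nonneg _)
      rw [hNr]; linarith
    exact div_nonneg h1' (Nat.cast_nonneg N)
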